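/- If G is a finite König–Egerváry graph, then α(G) + |⋂{V(G) − S : S a maximum independent set of G}| = μ(G) + |core(G)|. -/
import Mathlib

namespace KEPaper

open SimpleGraph

variable {V : Type*}

/-- `nbhd G S` is the set of vertices having a neighbor in `S`. -/
def nbhd (G : SimpleGraph V) (S : Set V) : Set V := {v | ∃ w ∈ S, G.Adj v w}

/-- `S` is an independent set of `G`: no two vertices of `S` are adjacent. -/
def IsIndep (G : SimpleGraph V) (S : Set V) : Prop :=
  S.Pairwise fun u v => ¬ G.Adj u v

/-- The independence number `α(G)`: maximum cardinality of an independent set. -/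
noncomputable def indepNum (G : SimpleGraph V) : ℕ :=
  sSup {n | ∃ S : Set V, IsIndep G S ∧ S.ncard = n}

/-- The matching number `μ(G)`: maximum cardinality of a matching. -/
noncomputable def matchNum (G : SimpleGraph V) : ℕ :=
  sSup {n | ∃ M : Subgraph G, M.IsMatching ∧ M.edgeSet.ncard = n}

/-- `S` is a maximum independent set of `G`. -/
def IsMaxIndep (G : SimpleGraph V) (S : Set V) : Prop :=
  IsIndep G S ∧ S.ncard = indepNum G

/-- The critical difference `d(G) = max {|S| - |N(S)| : S independent}`. -/
noncomputable def critDiff (G : SimpleGraph V) : ℤ :=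
  sSup {d : ℤ | ∃ S : Set V, IsIndep G S ∧ d = (S.ncard : ℤ) - ((nbhd G S).ncard : ℤ)}

/-- `S` is a critical independent set: independent with `|S| - |N(S)| = d(G)`. -/
def IsCritIndep (G : SimpleGraph V) (S : Set V) : Prop :=
  IsIndep G S ∧ (S.ncard : ℤ) - ((nbhd G S).ncard : ℤ) = critDiff G

/-- `core G` is the intersection of all maximum independent sets of `G`. -/
def core (G : SimpleGraph V) : Set V := ⋂ S ∈ {S : Set V | IsMaxIndep G S}, S

/-- `G` is a König–Egerváry graph: `|V(G)| = α(G) + μ(G)`. -/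
def KoenigEgervary (G : SimpleGraph V) : Prop :=
  Nat.card V = indepNum G + matchNum G

/-- `A` is a local maximum independent set of `G`: it is a maximum independent
set of the subgraph of `G` induced by `N[A] = A ∪ N(A)`. -/
def IsLocalMaxIndep (G : SimpleGraph V) (A : Set V) : Prop :=
  IsMaxIndep (G.induce (A ∪ nbhd G A)) {x : ↥(A ∪ nbhd G A) | ↑x ∈ A}

/-! ### Auxiliary lemmas -/

lemma indep_not_adj {G : SimpleGraph V} {S : Set V} (hS : IsIndep G S)
    {a b : V} (ha : a ∈ S) (hb : b ∈ S) : ¬ G.Adj a b := by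
  rcases eq_or_ne a b with rfl | hne
  · exact G.irrefl
  · exact hS ha hb hne

/-- There is a maximum independent set. -/
lemma exists_maxIndep [Finite V] (G : SimpleGraph V) : ∃ S : Set V, IsMaxIndep G S := by
  have hne : ({n | ∃ S : Set V, IsIndep G S ∧ S.ncard = n}).Nonempty :=
    ⟨0, ∅, by simp [IsIndep], by simp⟩
  have hbdd : BddAbove {n | ∃ S : Set V, IsIndep G S ∧ S.ncard = n} := by
    refine ⟨Nat.card V, ?_⟩
    rintro n ⟨S, -, rfl⟩
    have := Set.ncard_le_ncard (Set.subset_univ S) Set.finite_univ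
    simpa [Set.ncard_univ] using this
  obtain ⟨S, hS, hcard⟩ := Nat.sSup_mem hne hbdd
  exact ⟨S, hS, hcard⟩

/-- There is a maximum matching. -/
lemma exists_maxMatching [Finite V] (G : SimpleGraph V) :
    ∃ M : Subgraph G, M.IsMatching ∧ M.edgeSet.ncard = matchNum G := by
  have hne : ({n | ∃ M : Subgraph G, M.IsMatching ∧ M.edgeSet.ncard = n}).Nonempty := by
    refine ⟨0, ⊥, ?_, by simp⟩
    intro v hv
    simp [Subgraph.verts_bot] at hv
  have hbdd : BddAbove {n | ∃ M : Subgraph G, M.IsMatching ∧ M.edgeSet.ncard = n} := by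
    refine ⟨Nat.card (Sym2 V), ?_⟩
    rintro n ⟨M, -, rfl⟩
    have := Set.ncard_le_ncard (Set.subset_univ M.edgeSet) Set.finite_univ
    simpa [Set.ncard_univ] using this
  obtain ⟨M, hM, hcard⟩ := Nat.sSup_mem hne hbdd
  exact ⟨M, hM, hcard⟩

lemma mem_verts_of_mem_edge {G : SimpleGraph V} {M : Subgraph G} {e : Sym2 V} {v : V}
    (he : e ∈ M.edgeSet) (hv : v ∈ e) : v ∈ M.verts := by
  induction e with
  | _ a b =>
    rw [Subgraph.mem_edgeSet] at he
    rcases Sym2.mem_iff.mp hv with rfl | rfl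
    · exact M.edge_vert he
    · exact M.edge_vert he.symm

lemma matching_edge_unique {G : SimpleGraph V} {M : Subgraph G} (hM : M.IsMatching)
    {e e' : Sym2 V} (he : e ∈ M.edgeSet) (he' : e' ∈ M.edgeSet) {v : V}
    (hv : v ∈ e) (hv' : v ∈ e') : e = e' := by
  induction e with
  | _ a b =>
  induction e' with
  | _ c d =>
    rw [Subgraph.mem_edgeSet] at he he'
    have uniq : ∀ {x y z : V}, M.Adj x y → M.Adj x z → y = z := fun h1 h2 =>
      (hM (M.edge_vert h1)).unique h1 h2
    rcases Sym2.mem_iff.mp hv with rfl | rfl <;> rcases Sym2.mem_iff.mp hv' with rfl | rfl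
    · rw [uniq he he']
    · rw [uniq he he'.symm, Sym2.eq_swap]
    · rw [uniq he.symm he', Sym2.eq_swap]
    · rw [uniq he.symm he'.symm]

/-- Key lemma: for a maximum matching `M` and maximum independent set `S` of a
König–Egerváry graph, every vertex outside `S` is matched, and each matching
edge has exactly one endpoint in `S`. -/
lemma key_lemma [Finite V] {G : SimpleGraph V} (hG : KoenigEgervary G)
    {M : Subgraph G} (hM : M.IsMatching) (hMc : M.edgeSet.ncard = matchNum G)
    {S : Set V} (hS : IsMaxIndep G S) :
    Sᶜ ⊆ M.verts ∧ ∀ ⦃v w : V⦄, M.Adj v w → (v ∈ S ↔ w ∉ S) := by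
  have hScompl : Sᶜ.ncard = matchNum G := by
    have h1 : S.ncard + Sᶜ.ncard = Nat.card V := Set.ncard_add_ncard_compl S
    rw [hS.2] at h1
    rw [hG] at h1
    omega
  -- each edge has an endpoint outside S
  have hch : ∀ e : M.edgeSet, ∃ v, v ∈ (e : Sym2 V) ∧ v ∉ S := by
    rintro ⟨e, he⟩
    induction e with
    | _ a b =>
      rw [Subgraph.mem_edgeSet] at he
      by_contra h
      push_neg at h
      exact indep_not_adj hS.1 (h a (by simp)) (h b (by simp)) (M.adj_sub he)
  -- choice of such endpoint, as a map to Sᶜ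
  classical
  set F : M.edgeSet → ↥(Sᶜ) := fun e => ⟨(hch e).choose, (hch e).choose_spec.2⟩ with hF
  have hFmem : ∀ e : M.edgeSet, ((F e : V)) ∈ (e : Sym2 V) := fun e => (hch e).choose_spec.1
  have hFinj : Function.Injective F := by
    rintro ⟨e, he⟩ ⟨e', he'⟩ h
    have hv : ((F ⟨e, he⟩ : V)) ∈ e := hFmem _
    have hv' : ((F ⟨e, he⟩ : V)) ∈ e' := by
      have := hFmem ⟨e', he'⟩
      rwa [← h] at this
    exact Subtype.ext (matching_edge_unique hM he he' hv hv')
  have hcard : Nat.card M.edgeSet = Nat.card ↥(Sᶜ) := by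
    rw [Nat.card_coe_set_eq, Nat.card_coe_set_eq, hMc, hScompl]
  have hFbij : Function.Bijective F :=
    (Nat.bijective_iff_injective_and_card F).mpr ⟨hFinj, hcard⟩
  -- every vertex outside S is an endpoint of a matching edge
  have hsub : Sᶜ ⊆ M.verts := by
    intro v hv
    obtain ⟨e, he⟩ := hFbij.2 ⟨v, hv⟩
    have hmem := hFmem e
    rw [he] at hmem
    exact mem_verts_of_mem_edge e.2 hmem
  refine ⟨hsub, fun v w hvw => ?_⟩
  constructor
  · intro hvS hwS
    exact indep_not_adj hS.1 hvS hwS (M.adj_sub hvw)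
  · intro hw
    by_contra hv
    -- both v, w outside S: both are values of F at the same edge, contradiction
    have he : s(v, w) ∈ M.edgeSet := Subgraph.mem_edgeSet.mpr hvw
    obtain ⟨e1, he1⟩ := hFbij.2 ⟨v, hv⟩
    obtain ⟨e2, he2⟩ := hFbij.2 ⟨w, hw⟩
    have hv1 : v ∈ (e1 : Sym2 V) := by
      have := hFmem e1; rwa [Subtype.ext_iff.mp he1] at this
    have hw2 : w ∈ (e2 : Sym2 V) := by
      have := hFmem e2; rwa [Subtype.ext_iff.mp he2] at this
    have hveq : (e1 : Sym2 V) = s(v, w) :=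
      matching_edge_unique hM e1.2 he hv1 (by simp)
    have hweq : (e2 : Sym2 V) = s(v, w) :=
      matching_edge_unique hM e2.2 he hw2 (by simp)
    have : e1 = e2 := Subtype.ext (hveq.trans hweq.symm)
    rw [this, he2] at he1
    have : w = v := Subtype.ext_iff.mp he1
    exact (G.ne_of_adj (M.adj_sub hvw)) this.symm

/-- If `G` is a finite König–Egerváry graph, then
`α(G) + |⋂ {V(G) - S : S maximum independent}| = μ(G) + |core(G)|`. -/
theorem indepNum_add_iInter_compl_eq [Finite V] (G : SimpleGraph V)
    (hG : KoenigEgervary G) :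
    indepNum G + (⋂ S ∈ {S : Set V | IsMaxIndep G S}, Sᶜ).ncard
      = matchNum G + (core G).ncard := by
  classical
  obtain ⟨S₀, hS₀⟩ := exists_maxIndep G
  obtain ⟨M, hM, hMc⟩ := exists_maxMatching G
  set K : Set V := ⋂ S ∈ {S : Set V | IsMaxIndep G S}, Sᶜ with hK
  set C : Set V := core G with hC
  -- the partner map
  set p : V → V := fun v => if h : v ∈ M.verts then (hM h).choose else v with hp
  have hpadj : ∀ {v : V}, v ∈ M.verts → M.Adj v (p v) := by
    intro v hv
    simp only [hp, dif_pos hv]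
    exact (hM hv).choose_spec.1
  have hpuniq : ∀ {v w : V}, M.Adj v w → p v = w := by
    intro v w hvw
    have hv : v ∈ M.verts := M.edge_vert hvw
    simp only [hp, dif_pos hv]
    exact (hM hv).unique (hM hv).choose_spec.1 hvw
  have hpverts : ∀ {v : V}, v ∈ M.verts → p v ∈ M.verts := fun hv =>
    M.edge_vert (hpadj hv).symm
  have hpp : ∀ {v : V}, v ∈ M.verts → p (p v) = v := fun hv =>
    hpuniq (hpadj hv).symm
  -- key lemma facts for each maximum independent set
  have hkey : ∀ {S : Set V}, IsMaxIndep G S → Sᶜ ⊆ M.verts := by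
    intro S hS
    exact (key_lemma hG hM hMc hS).1
  have hiff : ∀ {S : Set V}, IsMaxIndep G S → ∀ {v : V}, v ∈ M.verts →
      (v ∈ S ↔ p v ∉ S) := by
    intro S hS v hv
    exact (key_lemma hG hM hMc hS).2 (hpadj hv)
  -- K ⊆ verts
  have hKverts : K ⊆ M.verts := fun v hv =>
    (hkey hS₀) (Set.mem_iInter₂.mp hv S₀ hS₀)
  -- p maps C ∩ verts into K, and K into C ∩ verts
  have hCK : ∀ v ∈ C ∩ M.verts, p v ∈ K := by
    rintro v ⟨hvC, hvM⟩
    refine Set.mem_iInter₂.mpr fun S hS => ?_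
    have hvS : v ∈ S := Set.mem_iInter₂.mp hvC S hS
    exact (hiff hS hvM).mp hvS
  have hKC : ∀ v ∈ K, p v ∈ C ∩ M.verts := by
    intro v hv
    have hvM : v ∈ M.verts := hKverts hv
    refine ⟨Set.mem_iInter₂.mpr fun S hS => ?_, hpverts hvM⟩
    have hvS : v ∉ S := Set.mem_iInter₂.mp hv S hS
    by_contra h
    exact hvS ((hiff hS hvM).mpr h)
  -- bijection between C ∩ verts and K
  have hbij : Set.BijOn p (C ∩ M.verts) K := by
    refine ⟨fun v hv => hCK v hv, ?_, ?_⟩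
    · intro a ha b hb h
      have := congrArg p h
      rwa [hpp ha.2, hpp hb.2] at this
    · intro v hv
      refine ⟨p v, hKC v hv, hpp (hKverts hv)⟩
  have hKcard : K.ncard = (C ∩ M.verts).ncard := by
    rw [← hbij.image_eq, Set.ncard_image_of_injOn hbij.injOn]
  -- vertices outside M.verts are in every maximum independent set
  have hcompl : M.vertsᶜ ⊆ C := by
    intro v hv
    refine Set.mem_iInter₂.mpr fun S hS => ?_
    by_contra h
    exact hv ((hkey hS) h)
  have hCdiff : C \ M.verts = M.vertsᶜ := by
    apply Set.eq_of_subset_of_subset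
    · intro v hv; exact hv.2
    · intro v hv; exact ⟨hcompl hv, hv⟩
  -- |M.verts| = 2 * μ via bijection between verts∩S₀ and S₀ᶜ
  have hS₀compl : (S₀ᶜ).ncard = matchNum G := by
    have h1 : S₀.ncard + S₀ᶜ.ncard = Nat.card V := Set.ncard_add_ncard_compl S₀
    rw [hS₀.2] at h1; rw [hG] at h1; omega
  have hvertsdiff : M.verts \ S₀ = S₀ᶜ := by
    apply Set.eq_of_subset_of_subset
    · intro v hv; exact hv.2
    · intro v hv; exact ⟨(hkey hS₀) hv, hv⟩
  have hbij₀ : Set.BijOn p (M.verts ∩ S₀) S₀ᶜ := by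
    refine ⟨?_, ?_, ?_⟩
    · rintro v ⟨hvM, hvS⟩
      exact (hiff hS₀ hvM).mp hvS
    · intro a ha b hb h
      have := congrArg p h
      rwa [hpp ha.1, hpp hb.1] at this
    · intro v hv
      have hvM : v ∈ M.verts := (hkey hS₀) hv
      have hpvS : p v ∈ S₀ := by
        by_contra h
        exact hv ((hiff hS₀ hvM).mpr h)
      exact ⟨p v, ⟨hpverts hvM, hpvS⟩, hpp hvM⟩
  have hintcard : (M.verts ∩ S₀).ncard = matchNum G := by
    rw [← hbij₀.image_eq, Set.ncard_image_of_injOn hbij₀.injOn] at hS₀compl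
    exact hS₀compl
  have hverts2 : M.verts.ncard = 2 * matchNum G := by
    have := Set.ncard_inter_add_ncard_diff_eq_ncard M.verts S₀ (Set.toFinite _)
    rw [hintcard, hvertsdiff, hS₀compl] at this
    omega
  -- final arithmetic
  have h1 : (C ∩ M.verts).ncard + (C \ M.verts).ncard = C.ncard :=
    Set.ncard_inter_add_ncard_diff_eq_ncard C M.verts (Set.toFinite _)
  have h2 : M.verts.ncard + M.vertsᶜ.ncard = Nat.card V :=
    Set.ncard_add_ncard_compl M.verts
  rw [hCdiff] at h1
  rw [hG] at h2
  omega

end KEPaper
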